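/- For all real numbers a, b with 0 < a ≤ b and every integer n ≥ 1, one has |Σ_{k=1}^n log(1 + b/k) − Σ_{k=1}^n log(1 + a/k)| ≤ (1 + log n)·(b − a). In other words, for the weights w_k(λ) = 1 + λ/k, the map λ ↦ Σ_{k=1}^n log(w_k(λ)) is (1 + log n)-Lipschitz on (0,∞). -/

import Mathlib

open Finset

/-- For the weights `w k (λ) = 1 + λ / k`, the map `λ ↦ ∑_{k=1}^n log (w k (λ))` is
`(1 + log n)`-Lipschitz on `(0, ∞)`. -/
theorem stmt_16 (a b : ℝ) (ha : 0 < a) (hab : a ≤ b) (n : ℕ) (hn : 1 ≤ n) :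
    |(∑ k ∈ Finset.Icc 1 n, Real.log (1 + b / (k : ℝ))) -
        ∑ k ∈ Finset.Icc 1 n, Real.log (1 + a / (k : ℝ))| ≤
      (1 + Real.log n) * (b - a) := by
  rw [← Finset.sum_sub_distrib]
  have hterm : ∀ k ∈ Finset.Icc 1 n,
      Real.log (1 + b / (k : ℝ)) - Real.log (1 + a / (k : ℝ)) ≤ (b - a) * (k : ℝ)⁻¹ := by
    intro k hk
    have hk1 : (1 : ℝ) ≤ k := by
      exact_mod_cast (Finset.mem_Icc.mp hk).1
    have hkpos : (0 : ℝ) < k := lt_of_lt_of_le one_pos hk1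
    have hA : (0 : ℝ) < 1 + a / k := by positivity
    have hB : (0 : ℝ) < 1 + b / k := lt_of_lt_of_le hA (by
      gcongr)
    rw [← Real.log_div (ne_of_gt hB) (ne_of_gt hA)]
    have h1 : (1 + b / k) / (1 + a / k) - 1 ≤ (b - a) * (k : ℝ)⁻¹ := by
      rw [div_sub_one (ne_of_gt hA), div_le_iff₀ hA]
      have : (1 + b / ↑k - (1 + a / ↑k)) = (b - a) * (k:ℝ)⁻¹ := by
        field_simp
        ring
      rw [this]
      nlinarith [mul_nonneg (mul_nonneg (sub_nonneg.mpr hab) (inv_nonneg.mpr hkpos.le))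
        (div_nonneg ha.le hkpos.le)]
    exact le_trans (Real.log_le_sub_one_of_pos (by positivity)) h1
  have hnonneg : ∀ k ∈ Finset.Icc 1 n,
      0 ≤ Real.log (1 + b / (k : ℝ)) - Real.log (1 + a / (k : ℝ)) := by
    intro k hk
    have hk1 : (1 : ℝ) ≤ k := by exact_mod_cast (Finset.mem_Icc.mp hk).1
    have hkpos : (0 : ℝ) < k := lt_of_lt_of_le one_pos hk1
    have hA : (0 : ℝ) < 1 + a / k := by positivity
    have : Real.log (1 + a / k) ≤ Real.log (1 + b / k) := by
      apply Real.log_le_log hA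
      gcongr
    linarith
  rw [abs_of_nonneg (Finset.sum_nonneg hnonneg)]
  calc ∑ k ∈ Finset.Icc 1 n, (Real.log (1 + b / (k : ℝ)) - Real.log (1 + a / (k : ℝ)))
      ≤ ∑ k ∈ Finset.Icc 1 n, (b - a) * (k : ℝ)⁻¹ := Finset.sum_le_sum hterm
    _ = (b - a) * ∑ k ∈ Finset.Icc 1 n, (k : ℝ)⁻¹ := by rw [Finset.mul_sum]
    _ ≤ (b - a) * (1 + Real.log n) := by
        apply mul_le_mul_of_nonneg_left _ (sub_nonneg.mpr hab)
        have h := harmonic_le_one_add_log n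
        have heq : ((harmonic n : ℚ) : ℝ) = ∑ k ∈ Finset.Icc 1 n, (k : ℝ)⁻¹ := by
          simp_rw [harmonic_eq_sum_Icc, Rat.cast_sum, Rat.cast_inv, Rat.cast_natCast]
        linarith [heq ▸ h]
    _ = (1 + Real.log n) * (b - a) := mul_comm _ _
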